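/- Let ≪ be a binary relation on a set M and let φ : M → M be a bijection that is ≪-equivariant and timelike. If U ⊆ M is a TIP, then φ⁻¹(U) is a TIP and φ⁻¹(U) ⊆ U. -/

import Mathlib

open Set Filter Topology MeasureTheory

/-- The chronological past of a set `A` with respect to relation `r`. -/
def chronPast {M : Type*} (r : M → M → Prop) (A : Set M) : Set M :=
  {x | ∃ y ∈ A, r x y}

/-- The chronological future of a set `A` with respect to relation `r`. -/
def chronFut {M : Type*} (r : M → M → Prop) (A : Set M) : Set M :=
  {x | ∃ y ∈ A, r y x}

/-- A past set: `I⁻(U) = U`. -/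
def IsPastSet {M : Type*} (r : M → M → Prop) (U : Set M) : Prop :=
  chronPast r U = U

/-- A future set: `I⁺(U) = U`. -/
def IsFutureSet {M : Type*} (r : M → M → Prop) (U : Set M) : Prop :=
  chronFut r U = U

/-- An indecomposable past set (IP): a nonempty past set that is not the union of
two past sets, each a proper subset of it. -/
def IsIP {M : Type*} (r : M → M → Prop) (U : Set M) : Prop :=
  U.Nonempty ∧ IsPastSet r U ∧
    ¬ ∃ A B : Set M, IsPastSet r A ∧ IsPastSet r B ∧ A ⊂ U ∧ B ⊂ U ∧ A ∪ B = U

/-- An indecomposable future set (IF). -/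
def IsIF {M : Type*} (r : M → M → Prop) (U : Set M) : Prop :=
  U.Nonempty ∧ IsFutureSet r U ∧
    ¬ ∃ A B : Set M, IsFutureSet r A ∧ IsFutureSet r B ∧ A ⊂ U ∧ B ⊂ U ∧ A ∪ B = U

/-- A terminal indecomposable past set (TIP): an IP not of the form `I⁻(p)`. -/
def IsTIP {M : Type*} (r : M → M → Prop) (U : Set M) : Prop :=
  IsIP r U ∧ ∀ p : M, U ≠ chronPast r {p}

/-- A terminal indecomposable future set (TIF): an IF not of the form `I⁺(p)`. -/
def IsTIF {M : Type*} (r : M → M → Prop) (U : Set M) : Prop :=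
  IsIF r U ∧ ∀ p : M, U ≠ chronFut r {p}

/-- A minimal TIP: a TIP containing no TIP as a proper subset. -/
def IsMinTIP {M : Type*} (r : M → M → Prop) (U : Set M) : Prop :=
  IsTIP r U ∧ ∀ V : Set M, IsTIP r V → V ⊆ U → V = U


lemma pre_chron {M : Type*} (r : M → M → Prop) (φ : M → M)
    (hsurj : Function.Surjective φ)
    (hequiv : ∀ x y : M, r x y ↔ r (φ x) (φ y)) (A : Set M) :
    φ ⁻¹' (chronPast r A) = chronPast r (φ ⁻¹' A) := by
  ext x
  constructor
  · rintro ⟨y, hy, hr⟩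
    obtain ⟨z, rfl⟩ := hsurj y
    exact ⟨z, hy, (hequiv x z).mpr hr⟩
  · rintro ⟨z, hz, hr⟩
    exact ⟨φ z, hz, (hequiv x z).mp hr⟩

/-- For an equivariant timelike bijection `φ`, the preimage of a TIP is
again a TIP and is contained in the original TIP. -/
theorem stmt_12 {M : Type*} (r : M → M → Prop)
    (φ : M → M) (hbij : Function.Bijective φ)
    (hequiv : ∀ x y : M, r x y ↔ r (φ x) (φ y))
    (htimelike : ∀ x : M, r x (φ x))
    (U : Set M) (hU : IsTIP r U) :
    IsTIP r (φ ⁻¹' U) ∧ φ ⁻¹' U ⊆ U := by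
  set e : M ≃ M := Equiv.ofBijective φ hbij with he
  have heφ : ∀ x, e x = φ x := fun x => rfl
  have hψequiv : ∀ x y : M, r x y ↔ r (e.symm x) (e.symm y) := by
    intro x y
    have h := hequiv (e.symm x) (e.symm y)
    simp only [← heφ, Equiv.apply_symm_apply] at h
    exact h.symm
  have hpre : ∀ A : Set M, IsPastSet r A → IsPastSet r (φ ⁻¹' A) := by
    intro A hA
    show chronPast r (φ ⁻¹' A) = φ ⁻¹' A
    rw [← pre_chron r φ hbij.surjective hequiv, hA]
  obtain ⟨⟨hne, hpast, hindec⟩, hterm⟩ := hU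
  have hsub : φ ⁻¹' U ⊆ U := by
    intro x hx
    rw [← hpast]
    exact ⟨φ x, hx, htimelike x⟩
  have himg : ∀ A : Set M, φ '' A = e.symm ⁻¹' A := by
    intro A
    ext x
    simp only [Set.mem_image, Set.mem_preimage]
    constructor
    · rintro ⟨a, ha, rfl⟩
      rw [← heφ, Equiv.symm_apply_apply]; exact ha
    · intro h
      exact ⟨e.symm x, h, by rw [← heφ, Equiv.apply_symm_apply]⟩
  have himgss : ∀ A B : Set M, A ⊂ B → φ '' A ⊂ φ '' B := by
    intro A B h
    refine ⟨Set.image_mono h.1, fun hc => h.2 ?_⟩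
    exact (Set.image_subset_image_iff hbij.injective).mp hc
  refine ⟨⟨⟨?_, hpre U hpast, ?_⟩, ?_⟩, hsub⟩
  · obtain ⟨u, hu⟩ := hne
    obtain ⟨v, rfl⟩ := hbij.surjective u
    exact ⟨v, hu⟩
  · rintro ⟨A, B, hA, hB, hAU, hBU, hABU⟩
    apply hindec
    refine ⟨φ '' A, φ '' B, ?_, ?_, ?_, ?_, ?_⟩
    · rw [himg]
      show chronPast r (e.symm ⁻¹' A) = e.symm ⁻¹' A
      rw [← pre_chron r e.symm e.symm.surjective hψequiv, hA]
    · rw [himg]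
      show chronPast r (e.symm ⁻¹' B) = e.symm ⁻¹' B
      rw [← pre_chron r e.symm e.symm.surjective hψequiv, hB]
    · rw [← Set.image_preimage_eq U hbij.surjective]
      exact himgss _ _ hAU
    · rw [← Set.image_preimage_eq U hbij.surjective]
      exact himgss _ _ hBU
    · rw [← Set.image_union, hABU, Set.image_preimage_eq U hbij.surjective]
  · intro p hp
    apply hterm (φ p)
    have hUeq : U = φ '' (chronPast r {p}) := by
      rw [← hp, Set.image_preimage_eq U hbij.surjective]
    rw [hUeq, himg, pre_chron r e.symm e.symm.surjective hψequiv]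
    have hs : (e.symm ⁻¹' ({p} : Set M)) = {φ p} := by
      ext x
      simp only [Set.mem_preimage, Set.mem_singleton_iff]
      constructor
      · intro h'
        rw [← heφ, ← h', Equiv.apply_symm_apply]
      · intro h'
        rw [h', ← heφ, Equiv.symm_apply_apply]
    rw [hs]
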